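/- arXiv:1911.04181 — 2 statements merged into one kernel-verified Lean document; each statement's English description precedes it below -/
import Mathlib

section
/- Let α, β ∈ PSL(2,ℂ) be loxodromic and suppose α sends a fixed point of β to the other. Then β sends a fixed point of α to the other if and only if tr²(α) = tr²(β). -/
/- Common setup: PSL(2,ℂ), its action on ℙ¹(ℂ), loxodromic/parabolic/elliptic elements,
elementary subgroups, surface groups, the pentagon group Γ and the embedding ι. -/

noncomputable section

open Matrix

/-- `SL(2,ℂ)`. -/
abbrev SL2C : Type := Matrix.SpecialLinearGroup (Fin 2) ℂ

instance : TopologicalSpace SL2C := instTopologicalSpaceSubtype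

/-- `PSL(2,ℂ)`, the quotient of `SL(2,ℂ)` by its center `{±I}`. -/
abbrev PSL2C : Type := SL2C ⧸ Subgroup.center SL2C

/-- The quotient map `SL(2,ℂ) → PSL(2,ℂ)`. -/
def projPSL : SL2C →* PSL2C := QuotientGroup.mk' (Subgroup.center SL2C)

/-- The complex projective line `ℙ¹(ℂ)`. -/
abbrev P1 : Type := Projectivization ℂ (Fin 2 → ℂ)

/-- The square of the trace, well defined on `PSL(2,ℂ)`. -/
def trSq (g : PSL2C) : ℂ :=
  (Matrix.trace ((Quotient.out g : SL2C) : Matrix (Fin 2) (Fin 2) ℂ)) ^ 2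

/-- `g` is loxodromic iff `tr² g` is not a real number in `[0,4]`. -/
def IsLoxodromic (g : PSL2C) : Prop := ¬ ∃ r : ℝ, 0 ≤ r ∧ r ≤ 4 ∧ trSq g = (r : ℂ)

/-- `g` is parabolic iff `g ≠ 1` and `tr² g = 4`. -/
def IsParabolic (g : PSL2C) : Prop := g ≠ 1 ∧ trSq g = 4

/-- `g` is elliptic iff `g ≠ 1` and `tr² g` is a real number in `[0,4)`. -/
def IsElliptic (g : PSL2C) : Prop := g ≠ 1 ∧ ∃ r : ℝ, 0 ≤ r ∧ r < 4 ∧ trSq g = (r : ℂ)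

lemma sl2_toLin'_injective (g : SL2C) :
    Function.Injective (Matrix.toLin' (g : Matrix (Fin 2) (Fin 2) ℂ)) := by
  intro v w h
  have h2 : Matrix.toLin' ((g⁻¹ : SL2C) : Matrix (Fin 2) (Fin 2) ℂ)
      (Matrix.toLin' ((g : SL2C) : Matrix (Fin 2) (Fin 2) ℂ) v) =
      Matrix.toLin' ((g⁻¹ : SL2C) : Matrix (Fin 2) (Fin 2) ℂ)
      (Matrix.toLin' ((g : SL2C) : Matrix (Fin 2) (Fin 2) ℂ) w) := by rw [h]
  rwa [← Matrix.toLin'_mul_apply, ← Matrix.toLin'_mul_apply,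
    ← Matrix.SpecialLinearGroup.coe_mul, inv_mul_cancel,
    Matrix.SpecialLinearGroup.coe_one, Matrix.toLin'_one, LinearMap.id_apply,
    LinearMap.id_apply] at h2

/-- The action of `PSL(2,ℂ)` on `ℙ¹(ℂ)` by Möbius transformations (independent of the
choice of representative, since the center acts trivially on lines). -/
def pslAct (g : PSL2C) (x : P1) : P1 :=
  Projectivization.map (Matrix.toLin' ((Quotient.out g : SL2C) : Matrix (Fin 2) (Fin 2) ℂ))
    (sl2_toLin'_injective _) x

/-- A subgroup of `PSL(2,ℂ)` is elementary if it has a nonempty invariant subset of `ℙ¹(ℂ)`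
with at most two elements, or its closure is compact. -/
def IsElementarySubgroup (G : Subgroup PSL2C) : Prop :=
  (∃ S : Set P1, S.Nonempty ∧ S.Finite ∧ S.ncard ≤ 2 ∧ ∀ g ∈ G, pslAct g '' S = S) ∨
    IsCompact (closure (G : Set PSL2C))

/-- A homomorphism to `PSL(2,ℂ)` is non-elementary if its image is non-elementary. -/
def IsNonElem {H : Type*} [Group H] (ρ : H →* PSL2C) : Prop :=
  ¬ IsElementarySubgroup ρ.range

/-- `g` sends a fixed point of `h` to the other one. -/
def SendsFixedToOther (g h : PSL2C) : Prop :=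
  ∃ p q : P1, p ≠ q ∧ pslAct h p = p ∧ pslAct h q = q ∧ (pslAct g p = q ∨ pslAct g q = p)

/-- `g` interchanges the two fixed points of `h`. -/
def InterchangesFixed (g h : PSL2C) : Prop :=
  ∃ p q : P1, p ≠ q ∧ pslAct h p = p ∧ pslAct h q = q ∧ pslAct g p = q ∧ pslAct g q = p

/-- `PSL(2,ℝ)` as a subgroup of `PSL(2,ℂ)`: the image of `SL(2,ℝ)`. -/
def PSL2R : Subgroup PSL2C :=
  (projPSL.comp (Matrix.SpecialLinearGroup.map (n := Fin 2) Complex.ofRealHom)).range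

/-- `γ₁, γ₂` generate a rank-two Schottky group: the induced map from the free group `F₂` is
injective, with discrete image, all of whose nontrivial elements are loxodromic. -/
def GeneratesSchottky (γ₁ γ₂ : PSL2C) : Prop :=
  Function.Injective (FreeGroup.lift ![γ₁, γ₂] : FreeGroup (Fin 2) →* PSL2C) ∧
    DiscreteTopology ((FreeGroup.lift ![γ₁, γ₂] : FreeGroup (Fin 2) →* PSL2C).range) ∧
    ∀ g ∈ (FreeGroup.lift ![γ₁, γ₂] : FreeGroup (Fin 2) →* PSL2C).range, g ≠ 1 → IsLoxodromic g

/-- The commutator `[x,y] = y⁻¹x⁻¹yx` in a free group. -/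
def commF {α : Type*} (x y : FreeGroup α) : FreeGroup α := y⁻¹ * x⁻¹ * y * x

/-- The surface relator `[a_g,b_g]⋯[a₁,b₁]`. -/
def surfaceRel (g : ℕ) : FreeGroup (Fin g × Bool) :=
  (((List.finRange g).reverse).map
    (fun i => commF (FreeGroup.of (i, false)) (FreeGroup.of (i, true)))).prod

/-- The genus-`g` surface group `Γ_g`. -/
abbrev SurfaceGroup (g : ℕ) : Type :=
  PresentedGroup ({surfaceRel g} : Set (FreeGroup (Fin g × Bool)))

/-- The generator `a_{i+1}` of `Γ_g`. -/
def sgA (g : ℕ) (i : Fin g) : SurfaceGroup g := PresentedGroup.of (i, false)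

/-- The generator `b_{i+1}` of `Γ_g`. -/
def sgB (g : ℕ) (i : Fin g) : SurfaceGroup g := PresentedGroup.of (i, true)

/-- The genus-2 surface group `Γ₂`. -/
abbrev Gamma2 : Type := SurfaceGroup 2
def a1 : Gamma2 := sgA 2 0
def b1 : Gamma2 := sgB 2 0
def a2 : Gamma2 := sgA 2 1
def b2 : Gamma2 := sgB 2 1

/-- Relations for the group `Γ = ⟨q₁,…,q₆ ∣ qᵢ² = 1, q₁q₂q₃q₄q₅q₆ = 1⟩`. -/
def pentagonRels : Set (FreeGroup (Fin 6)) :=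
  (Set.range fun i : Fin 6 => FreeGroup.of i * FreeGroup.of i) ∪
    {((List.finRange 6).map FreeGroup.of).prod}

/-- The group `Γ = ⟨q₁,…,q₆ ∣ qᵢ² = 1, q₁q₂q₃q₄q₅q₆ = 1⟩`. -/
abbrev GammaP : Type := PresentedGroup pentagonRels

/-- The generator `q_{i+1}` of `Γ`. -/
def qgen (i : Fin 6) : GammaP := PresentedGroup.of i

lemma qgen_mul_self (i : Fin 6) : qgen i * qgen i = 1 := by
  have hmem : FreeGroup.of i * FreeGroup.of i ∈ pentagonRels :=
    Set.mem_union_left _ ⟨i, rfl⟩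
  have h : (PresentedGroup.mk pentagonRels (FreeGroup.of i * FreeGroup.of i)) = 1 :=
    (QuotientGroup.eq_one_iff _).mpr (Subgroup.subset_normalClosure hmem)
  rw [_root_.map_mul] at h
  exact h

lemma qgen_prod : qgen 0 * (qgen 1 * (qgen 2 * (qgen 3 * (qgen 4 * qgen 5)))) = 1 := by
  have hmem : ((List.finRange 6).map FreeGroup.of).prod ∈ pentagonRels :=
    Set.mem_union_right _ rfl
  have h : (PresentedGroup.mk pentagonRels (((List.finRange 6).map FreeGroup.of).prod)) = 1 :=
    (QuotientGroup.eq_one_iff _).mpr (Subgroup.subset_normalClosure hmem)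
  have h6 : List.finRange 6 = [0, 1, 2, 3, 4, 5] := by decide
  rw [h6] at h
  simp [mul_assoc] at h
  exact h

lemma pent_helper {G : Type*} [Group G] (x : Fin 6 → G) (hx : ∀ i, x i * x i = 1)
    (hp : x 0 * (x 1 * (x 2 * (x 3 * (x 4 * x 5)))) = 1) :
    (x 4 * x 5)⁻¹ * (x 4 * x 3)⁻¹ * (x 4 * x 5) * (x 4 * x 3) *
      ((x 1 * x 2)⁻¹ * (x 1 * x 0)⁻¹ * (x 1 * x 2) * (x 1 * x 0)) = 1 := by
  have hinv : ∀ i, (x i)⁻¹ = x i := fun i => inv_eq_of_mul_eq_one_right (hx i)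
  have hrev : x 5 * (x 4 * (x 3 * (x 2 * (x 1 * x 0)))) = 1 := by
    have h := congrArg (·⁻¹) hp
    simpa [_root_.mul_inv_rev, hinv, mul_assoc] using h
  have key : ∀ (i : Fin 6) (t : G), x i * (x i * t) = t := fun i t => by
    rw [← mul_assoc, hx, one_mul]
  have key2 : ∀ t : G, x 5 * (x 4 * (x 3 * (x 2 * (x 1 * (x 0 * t))))) = t := fun t => by
    calc x 5 * (x 4 * (x 3 * (x 2 * (x 1 * (x 0 * t)))))
        = (x 5 * (x 4 * (x 3 * (x 2 * (x 1 * x 0))))) * t := by simp [mul_assoc]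
      _ = t := by rw [hrev, one_mul]
  simp only [_root_.mul_inv_rev, hinv, mul_assoc]
  simp only [key, key2]
  exact hrev

/-- The images of the generators `a₁, b₁, a₂, b₂` under `ι`. -/
def pentMap : Fin 2 × Bool → GammaP
  | (0, false) => qgen 1 * qgen 0
  | (0, true) => qgen 1 * qgen 2
  | (1, false) => qgen 4 * qgen 3
  | (1, true) => qgen 4 * qgen 5

lemma surfaceRel_two :
    surfaceRel 2 = commF (FreeGroup.of ((1 : Fin 2), false)) (FreeGroup.of ((1 : Fin 2), true)) *
      commF (FreeGroup.of ((0 : Fin 2), false)) (FreeGroup.of ((0 : Fin 2), true)) := by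
  have h : List.finRange 2 = [0, 1] := by decide
  simp [surfaceRel, h]

/-- The embedding `ι : Γ₂ → Γ`, `a₁ ↦ q₂q₁`, `b₁ ↦ q₂q₃`, `a₂ ↦ q₅q₄`, `b₂ ↦ q₅q₆`. -/
def iota : Gamma2 →* GammaP :=
  PresentedGroup.toGroup (f := pentMap) (by
    intro r hr
    rw [Set.mem_singleton_iff] at hr
    subst hr
    rw [surfaceRel_two]
    simp only [commF, _root_.map_mul, _root_.map_inv, FreeGroup.lift_apply_of]
    have h01 : pentMap ((0 : Fin 2), false) = qgen 1 * qgen 0 := rfl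
    have h02 : pentMap ((0 : Fin 2), true) = qgen 1 * qgen 2 := rfl
    have h11 : pentMap ((1 : Fin 2), false) = qgen 4 * qgen 3 := rfl
    have h12 : pentMap ((1 : Fin 2), true) = qgen 4 * qgen 5 := rfl
    rw [h01, h02, h11, h12]
    exact pent_helper (fun i => qgen i) qgen_mul_self qgen_prod)

/-- A pentagon representation: a non-elementary `ρ : Γ₂ → PSL(2,ℂ)` extending to `Γ` with
exactly one `qᵢ` killed. -/
def IsPentagonRep (ρ : Gamma2 →* PSL2C) : Prop :=
  IsNonElem ρ ∧ ∃ ρ' : GammaP →* PSL2C, ρ'.comp iota = ρ ∧ ∃! i : Fin 6, ρ' (qgen i) = 1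

/-- A primitive element of the free group `F₂`: part of a free basis. -/
def IsPrimitiveF2 (γ : FreeGroup (Fin 2)) : Prop :=
  ∃ φ : MulAut (FreeGroup (Fin 2)), φ (FreeGroup.of 0) = γ

/-- `pp` and `pm` are the attracting resp. repelling fixed points of `α`: for a representative
`A ∈ SL(2,ℂ)` with eigenvalues `l, l⁻¹`, `|l| > 1`, they are the corresponding eigenlines. -/
def IsAttrRep (α : PSL2C) (pp pm : P1) : Prop :=
  ∃ A : SL2C, projPSL A = α ∧ ∃ l : ℂ, 1 < ‖l‖ ∧
    ∃ (v w : Fin 2 → ℂ) (hv : v ≠ 0) (hw : w ≠ 0),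
      (A : Matrix (Fin 2) (Fin 2) ℂ) *ᵥ v = l • v ∧
      (A : Matrix (Fin 2) (Fin 2) ℂ) *ᵥ w = l⁻¹ • w ∧
      pp = Projectivization.mk ℂ v hv ∧ pm = Projectivization.mk ℂ w hw

lemma projPSL_out (g : PSL2C) : projPSL (Quotient.out g) = g := Quotient.out_eq g

lemma out_of_projPSL (A : SL2C) :
    Quotient.out (projPSL A) = A ∨ Quotient.out (projPSL A) = -A := by
  have h : projPSL (Quotient.out (projPSL A)) = projPSL A := projPSL_out _
  obtain ⟨z, hz, hza⟩ := (QuotientGroup.mk'_eq_mk' (N := Subgroup.center SL2C)).mp h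
  obtain ⟨r, hr, hr'⟩ := Matrix.SpecialLinearGroup.mem_center_iff.mp hz
  have hcard : Fintype.card (Fin 2) = 2 := by simp
  rw [hcard] at hr
  have hr1 : r = 1 ∨ r = -1 := by
    have := mul_self_eq_one_iff (a := r)
    rw [← sq] at this
    exact this.mp hr
  have hz1 : z = 1 ∨ z = -1 := by
    rcases hr1 with h1 | h1
    · left; ext i j
      rw [← hr', h1]
      simp [Matrix.scalar_apply, Matrix.one_apply]
    · right; ext i j
      rw [← hr', h1]
      simp [Matrix.scalar_apply, Matrix.SpecialLinearGroup.coe_neg, Matrix.one_apply]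
      split <;> simp_all
  rcases hz1 with h1 | h1
  · left; rw [h1, mul_one] at hza; exact hza
  · right; rw [h1, mul_neg_one] at hza
    exact neg_eq_iff_eq_neg.mp hza

lemma trSq_projPSL (A : SL2C) :
    trSq (projPSL A) = (Matrix.trace (A : Matrix (Fin 2) (Fin 2) ℂ))^2 := by
  unfold trSq
  rcases out_of_projPSL A with h | h <;> rw [h]
  rw [Matrix.SpecialLinearGroup.coe_neg, Matrix.trace_neg]
  ring

lemma mulVec_ne_zero (A : SL2C) {v : Fin 2 → ℂ} (hv : v ≠ 0) :
    (A : Matrix (Fin 2) (Fin 2) ℂ) *ᵥ v ≠ 0 := by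
  intro h0
  apply hv
  apply sl2_toLin'_injective A
  simp [Matrix.toLin'_apply, h0]

lemma pslAct_eq_of_rep (A B : SL2C) (hAB : B = A ∨ B = -A) (v : Fin 2 → ℂ) (hv : v ≠ 0) :
    Projectivization.map (Matrix.toLin' ((B : SL2C) : Matrix (Fin 2) (Fin 2) ℂ))
      (sl2_toLin'_injective B) (Projectivization.mk ℂ v hv) =
      Projectivization.mk ℂ ((A : Matrix (Fin 2) (Fin 2) ℂ) *ᵥ v) (mulVec_ne_zero A hv) := by
  rcases hAB with rfl | rfl <;> rw [Projectivization.map_mk] <;>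
    simp only [Matrix.toLin'_apply]
  rw [Projectivization.mk_eq_mk_iff']
  refine ⟨-1, ?_⟩
  simp [Matrix.SpecialLinearGroup.coe_neg, Matrix.neg_mulVec]

lemma pslAct_mk (A : SL2C) (v : Fin 2 → ℂ) (hv : v ≠ 0) :
    pslAct (projPSL A) (Projectivization.mk ℂ v hv) =
      Projectivization.mk ℂ ((A : Matrix (Fin 2) (Fin 2) ℂ) *ᵥ v) (mulVec_ne_zero A hv) := by
  unfold pslAct
  exact pslAct_eq_of_rep A _ (out_of_projPSL A) v hv

lemma act_mk_eq_mk_iff (A : SL2C) (u₁ u₂ : Fin 2 → ℂ) (h₁ : u₁ ≠ 0) (h₂ : u₂ ≠ 0) :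
    pslAct (projPSL A) (Projectivization.mk ℂ u₁ h₁) = Projectivization.mk ℂ u₂ h₂ ↔
      ∃ d : ℂ, d ≠ 0 ∧ (A : Matrix (Fin 2) (Fin 2) ℂ) *ᵥ u₁ = d • u₂ := by
  rw [pslAct_mk, Projectivization.mk_eq_mk_iff']
  constructor
  · rintro ⟨d, hd⟩
    refine ⟨d, fun h0 => mulVec_ne_zero A h₁ ?_, hd.symm⟩
    rw [← hd, h0, zero_smul]
  · rintro ⟨d, _, hd⟩
    exact ⟨d, hd.symm⟩

/-- The 2×2 "cross product" / determinant of two vectors. -/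
def Del (u z : Fin 2 → ℂ) : ℂ := u 0 * z 1 - u 1 * z 0

lemma Del_comb (v w : Fin 2 → ℂ) (a b c d : ℂ) :
    Del (a • v + b • w) (c • v + d • w) = (a * d - b * c) * Del v w := by
  simp only [Del, Pi.add_apply, Pi.smul_apply, smul_eq_mul]
  ring

lemma Del_mulVec (A : Matrix (Fin 2) (Fin 2) ℂ) (u z : Fin 2 → ℂ) :
    Del (A *ᵥ u) (A *ᵥ z) = A.det * Del u z := by
  simp only [Del, Matrix.mulVec, dotProduct, Fin.sum_univ_two, Matrix.det_fin_two]
  ring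

lemma Del_trace (A : Matrix (Fin 2) (Fin 2) ℂ) (u z : Fin 2 → ℂ) :
    Del (A *ᵥ u) z + Del u (A *ᵥ z) = A.trace * Del u z := by
  simp only [Del, Matrix.mulVec, dotProduct, Fin.sum_univ_two, Matrix.trace_fin_two]
  ring

lemma vec_ne_zero_iff (u : Fin 2 → ℂ) : u ≠ 0 ↔ u 0 ≠ 0 ∨ u 1 ≠ 0 := by
  rw [Function.ne_iff]
  constructor
  · rintro ⟨i, hi⟩
    fin_cases i
    · exact Or.inl hi
    · exact Or.inr hi
  · rintro (h | h)
    · exact ⟨0, h⟩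
    · exact ⟨1, h⟩

lemma Del_zero_iff {u : Fin 2 → ℂ} (z : Fin 2 → ℂ) (hu : u ≠ 0) :
    Del u z = 0 ↔ ∃ c : ℂ, z = c • u := by
  constructor
  · intro h0
    rcases (vec_ne_zero_iff u).mp hu with h | h
    · refine ⟨z 0 / u 0, ?_⟩
      funext i
      fin_cases i <;> simp only [Fin.zero_eta, Fin.mk_one, Pi.smul_apply, smul_eq_mul] <;> field_simp
      simp only [Del] at h0
      linear_combination h0
    · refine ⟨z 1 / u 1, ?_⟩
      funext i
      fin_cases i <;> simp only [Fin.zero_eta, Fin.mk_one, Pi.smul_apply, smul_eq_mul] <;> field_simp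
      simp only [Del] at h0
      linear_combination -h0
  · rintro ⟨c, rfl⟩
    simp only [Del, Pi.smul_apply, smul_eq_mul]
    ring

lemma span2 {v w : Fin 2 → ℂ} (hΔ : Del v w ≠ 0) (u : Fin 2 → ℂ) :
    ∃ x y : ℂ, u = x • v + y • w := by
  refine ⟨(u 0 * w 1 - u 1 * w 0) / Del v w, (v 0 * u 1 - v 1 * u 0) / Del v w, ?_⟩
  funext i
  simp only [Del] at hΔ ⊢
  fin_cases i <;> simp only [Fin.zero_eta, Fin.mk_one, Pi.add_apply, Pi.smul_apply, smul_eq_mul] <;>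
    rw [div_mul_eq_mul_div, div_mul_eq_mul_div, ← add_div, eq_div_iff hΔ] <;> ring

lemma unique2 {v w : Fin 2 → ℂ} (hΔ : Del v w ≠ 0) {a b : ℂ}
    (h : a • v + b • w = 0) : a = 0 ∧ b = 0 := by
  have h0 := congrFun h 0
  have h1 := congrFun h 1
  simp only [Pi.add_apply, Pi.smul_apply, smul_eq_mul, Pi.zero_apply] at h0 h1
  simp only [Del] at hΔ
  constructor
  · by_contra ha
    have key : a * (v 0 * w 1 - v 1 * w 0) = 0 := by linear_combination w 1 * h0 - w 0 * h1
    rcases mul_eq_zero.mp key with h' | h'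
    · exact ha h'
    · exact hΔ h'
  · by_contra hb
    have key : b * (v 0 * w 1 - v 1 * w 0) = 0 := by linear_combination v 0 * h1 - v 1 * h0
    rcases mul_eq_zero.mp key with h' | h'
    · exact hb h'
    · exact hΔ h'

lemma coeffs_eq {v w : Fin 2 → ℂ} (hΔ : Del v w ≠ 0) {a b a' b' : ℂ}
    (h : a • v + b • w = a' • v + b' • w) : a = a' ∧ b = b' := by
  have h' : (a - a') • v + (b - b') • w = 0 := by
    rw [sub_smul, sub_smul, sub_add_sub_comm, h, sub_self]
  obtain ⟨h1, h2⟩ := unique2 hΔ h'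
  exact ⟨sub_eq_zero.mp h1, sub_eq_zero.mp h2⟩

lemma Del_smul_left (a : ℂ) (u z : Fin 2 → ℂ) : Del (a • u) z = a * Del u z := by
  simp only [Del, Pi.smul_apply, smul_eq_mul]; ring

lemma Del_smul_right (a : ℂ) (u z : Fin 2 → ℂ) : Del u (a • z) = a * Del u z := by
  simp only [Del, Pi.smul_apply, smul_eq_mul]; ring

lemma mk_ne_mk_of_Del {v w : Fin 2 → ℂ} (hv : v ≠ 0) (hw : w ≠ 0) (hΔ : Del v w ≠ 0) :
    Projectivization.mk ℂ v hv ≠ Projectivization.mk ℂ w hw := by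
  intro h
  obtain ⟨a, ha⟩ := (Projectivization.mk_eq_mk_iff' ℂ v w hv hw).mp h
  apply hΔ
  rw [← ha, Del_smul_left]
  simp only [Del]
  ring

lemma fixed_classify (B : SL2C) {l : ℂ} {v w : Fin 2 → ℂ} (hv : v ≠ 0) (hw : w ≠ 0)
    (hBv : (B : Matrix (Fin 2) (Fin 2) ℂ) *ᵥ v = l • v)
    (hBw : (B : Matrix (Fin 2) (Fin 2) ℂ) *ᵥ w = l⁻¹ • w)
    (hl0 : l ≠ 0) (hl2 : l ^ 2 ≠ 1) (hΔ : Del v w ≠ 0)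
    (x : P1) (hx : pslAct (projPSL B) x = x) :
    x = Projectivization.mk ℂ v hv ∨ x = Projectivization.mk ℂ w hw := by
  induction x using Projectivization.ind with
  | h u hu =>
    rw [act_mk_eq_mk_iff] at hx
    obtain ⟨d, hd0, hd⟩ := hx
    obtain ⟨a, b, rfl⟩ := span2 hΔ u
    rw [Matrix.mulVec_add, Matrix.mulVec_smul, Matrix.mulVec_smul, hBv, hBw] at hd
    have hd' : (a * l) • v + (b * l⁻¹) • w = (d * a) • v + (d * b) • w := by
      simp only [smul_smul] at hd
      rw [smul_add, smul_smul, smul_smul] at hd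
      exact hd
    obtain ⟨ea, eb⟩ := coeffs_eq hΔ hd'
    by_cases ha : a = 0
    · right
      have hb : b ≠ 0 := by
        intro hb
        apply hu
        rw [ha, hb, zero_smul, zero_smul, add_zero]
      rw [Projectivization.mk_eq_mk_iff']
      exact ⟨b, by rw [ha, zero_smul, zero_add]⟩
    · have hdl : d = l := by
        have h3 : a * l = a * d := by linear_combination ea
        exact (mul_left_cancel₀ ha h3).symm
      by_cases hb : b = 0
      · left
        rw [Projectivization.mk_eq_mk_iff']
        exact ⟨a, by rw [hb, zero_smul, add_zero]⟩
      · exfalso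
        apply hl2
        have h3 : b * l⁻¹ = b * l := by rw [hdl] at eb; linear_combination eb
        have h2 : l⁻¹ = l := mul_left_cancel₀ hb h3
        rw [sq]
        nth_rewrite 2 [← h2]
        exact mul_inv_cancel₀ hl0

lemma smul_one_mulVec (x : ℂ) (v : Fin 2 → ℂ) :
    (x • (1 : Matrix (Fin 2) (Fin 2) ℂ)) *ᵥ v = x • v := by
  rw [Matrix.smul_mulVec, Matrix.one_mulVec]

lemma exists_eigenvec (B : SL2C) (x : ℂ)
    (hx : x ^ 2 - Matrix.trace (B : Matrix (Fin 2) (Fin 2) ℂ) * x + 1 = 0) :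
    ∃ v : Fin 2 → ℂ, v ≠ 0 ∧ (B : Matrix (Fin 2) (Fin 2) ℂ) *ᵥ v = x • v := by
  have hdet : Matrix.det ((B : Matrix (Fin 2) (Fin 2) ℂ) - x • 1) = 0 := by
    have hB := B.prop
    rw [Matrix.det_fin_two] at hB ⊢
    rw [Matrix.trace_fin_two] at hx
    simp only [Matrix.sub_apply, Matrix.smul_apply, Matrix.one_apply_eq,
      Matrix.one_apply_ne (by decide : (0 : Fin 2) ≠ 1),
      Matrix.one_apply_ne (by decide : (1 : Fin 2) ≠ 0), smul_eq_mul]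
    ring_nf
    ring_nf at hx
    linear_combination hx + hB
  obtain ⟨v, hv, hv0⟩ := (Matrix.exists_mulVec_eq_zero_iff).mpr hdet
  refine ⟨v, hv, ?_⟩
  rw [Matrix.sub_mulVec, smul_one_mulVec, sub_eq_zero] at hv0
  exact hv0

lemma eigen_data (B : SL2C) (hB : (Matrix.trace (B : Matrix (Fin 2) (Fin 2) ℂ)) ^ 2 ≠ 4) :
    ∃ (l : ℂ) (v w : Fin 2 → ℂ), v ≠ 0 ∧ w ≠ 0 ∧
      (B : Matrix (Fin 2) (Fin 2) ℂ) *ᵥ v = l • v ∧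
      (B : Matrix (Fin 2) (Fin 2) ℂ) *ᵥ w = l⁻¹ • w ∧
      l ≠ 0 ∧ l ^ 2 ≠ 1 ∧ Del v w ≠ 0 := by
  set t := Matrix.trace (B : Matrix (Fin 2) (Fin 2) ℂ) with ht
  obtain ⟨s, hs⟩ := IsAlgClosed.exists_pow_nat_eq (t ^ 2 - 4) (n := 2) (by norm_num)
  have hs0 : s ≠ 0 := by
    intro h0
    rw [h0] at hs
    exact hB (by linear_combination -hs)
  set l := (t + s) / 2 with hl
  set μ := (t - s) / 2 with hμ
  have hlμ : l * μ = 1 := by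
    field_simp [hl, hμ]
    linear_combination -hs / 4
  have hl0 : l ≠ 0 := left_ne_zero_of_mul_eq_one hlμ
  have hμl : μ = l⁻¹ := (inv_eq_of_mul_eq_one_right hlμ).symm
  have hl2 : l ^ 2 ≠ 1 := by
    intro h1
    have : l = μ := by
      rw [hμl]
      field_simp
      linear_combination h1
    apply hs0
    rw [hl, hμ] at this
    linear_combination this
  obtain ⟨v, hv, hveq⟩ := exists_eigenvec B l (by rw [← ht, hl]; linear_combination hs / 4)
  have hiq : (l⁻¹) ^ 2 - Matrix.trace (B : Matrix (Fin 2) (Fin 2) ℂ) * l⁻¹ + 1 = 0 := by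
    rw [← hμl, ← ht, hμ]
    linear_combination hs / 4
  obtain ⟨w, hw, hweq⟩ := exists_eigenvec B l⁻¹ hiq
  refine ⟨l, v, w, hv, hw, hveq, hweq, hl0, hl2, ?_⟩
  intro hΔ
  obtain ⟨c, rfl⟩ := (Del_zero_iff _ hv).mp hΔ
  rw [Matrix.mulVec_smul, hveq] at hweq
  have : (c * l - l⁻¹ * c) • v = 0 := by
    rw [sub_smul, sub_eq_zero, mul_smul, mul_smul]
    rw [hweq]
  rcases smul_eq_zero.mp this with h' | h'
  · have hc : c = 0 := by
      rcases mul_eq_zero.mp (show c * (l - l⁻¹) = 0 by linear_combination h') with h'' | h''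
      · exact h''
      · exfalso
        apply hl2
        have hll : l = l⁻¹ := sub_eq_zero.mp h''
        rw [sq]
        nth_rewrite 2 [hll]
        exact mul_inv_cancel₀ hl0
    rw [hc, zero_smul] at hw
    exact hw rfl
  · exact hv h'

lemma core (A B : SL2C) (l m c : ℂ) (v w v' w' : Fin 2 → ℂ)
    (hv' : v' ≠ 0) (hw' : w' ≠ 0)
    (hBv : (B : Matrix (Fin 2) (Fin 2) ℂ) *ᵥ v = l • v)
    (hBw : (B : Matrix (Fin 2) (Fin 2) ℂ) *ᵥ w = l⁻¹ • w)
    (hAv' : (A : Matrix (Fin 2) (Fin 2) ℂ) *ᵥ v' = m • v')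
    (hAw' : (A : Matrix (Fin 2) (Fin 2) ℂ) *ᵥ w' = m⁻¹ • w')
    (hl0 : l ≠ 0) (hm0 : m ≠ 0)
    (hΔ : Del v w ≠ 0) (hΔ' : Del v' w' ≠ 0)
    (hc : (A : Matrix (Fin 2) (Fin 2) ℂ) *ᵥ v = c • w) :
    ((∃ d : ℂ, (B : Matrix (Fin 2) (Fin 2) ℂ) *ᵥ v' = d • w') ∨
     (∃ d : ℂ, (B : Matrix (Fin 2) (Fin 2) ℂ) *ᵥ w' = d • v')) ↔
      (Matrix.trace ((A : SL2C) : Matrix (Fin 2) (Fin 2) ℂ)) ^ 2 =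
      (Matrix.trace ((B : SL2C) : Matrix (Fin 2) (Fin 2) ℂ)) ^ 2 := by
  set tA := Matrix.trace ((A : SL2C) : Matrix (Fin 2) (Fin 2) ℂ) with htAdef
  set tB := Matrix.trace ((B : SL2C) : Matrix (Fin 2) (Fin 2) ℂ) with htBdef
  set L := l⁻¹ with hLdef
  set Mi := m⁻¹ with hMidef
  have hL : l * L = 1 := mul_inv_cancel₀ hl0
  have hMi : m * Mi = 1 := mul_inv_cancel₀ hm0
  -- trace of B
  have htB : tB = l + L := by
    have h1 := Del_trace ((B : SL2C) : Matrix (Fin 2) (Fin 2) ℂ) v w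
    rw [hBv, hBw, Del_smul_left, Del_smul_right] at h1
    have h2 : (l + L) * Del v w = tB * Del v w := by linear_combination h1
    exact (mul_right_cancel₀ hΔ h2).symm
  -- the image of w under A in the (v, w) basis
  obtain ⟨e, f, hAw⟩ := span2 hΔ ((A : Matrix (Fin 2) (Fin 2) ℂ) *ᵥ w)
  have detA : Matrix.det ((A : SL2C) : Matrix (Fin 2) (Fin 2) ℂ) = 1 := A.prop
  have hce : c * e = -1 := by
    have h2 := Del_mulVec ((A : SL2C) : Matrix (Fin 2) (Fin 2) ℂ) v w
    rw [detA, one_mul, hc, hAw] at h2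
    have h3 : Del (c • w) (e • v + f • w) = -(c * e) * Del v w := by
      simp only [Del, Pi.add_apply, Pi.smul_apply, smul_eq_mul]; ring
    have h4 : -(c * e) * Del v w = 1 * Del v w := by rw [← h3, h2, one_mul]
    have h5 := mul_right_cancel₀ hΔ h4
    linear_combination -h5
  have htA : tA = f := by
    have h5 := Del_trace ((A : SL2C) : Matrix (Fin 2) (Fin 2) ℂ) v w
    rw [hc, hAw] at h5
    have h6 : Del (c • w) w + Del v (e • v + f • w) = f * Del v w := by
      simp only [Del, Pi.add_apply, Pi.smul_apply, smul_eq_mul]; ring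
    rw [h6] at h5
    exact (mul_right_cancel₀ hΔ h5).symm
  -- coordinates of the eigenvectors of A
  obtain ⟨x, y, hv'c⟩ := span2 hΔ v'
  obtain ⟨x₂, y₂, hw'c⟩ := span2 hΔ w'
  have eigen1 : (y * e) • v + (x * c + y * f) • w = (m * x) • v + (m * y) • w := by
    have lhs : (A : Matrix (Fin 2) (Fin 2) ℂ) *ᵥ v' = (y * e) • v + (x * c + y * f) • w := by
      rw [hv'c, Matrix.mulVec_add, Matrix.mulVec_smul, Matrix.mulVec_smul, hc, hAw]
      funext i; simp only [Pi.add_apply, Pi.smul_apply, smul_eq_mul]; ring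
    have rhs : m • v' = (m * x) • v + (m * y) • w := by
      rw [hv'c]; funext i; simp only [Pi.add_apply, Pi.smul_apply, smul_eq_mul]; ring
    rw [← lhs, ← rhs, hAv']
  obtain ⟨E1, E2⟩ := coeffs_eq hΔ eigen1
  have eigen2 : (y₂ * e) • v + (x₂ * c + y₂ * f) • w = (Mi * x₂) • v + (Mi * y₂) • w := by
    have lhs : (A : Matrix (Fin 2) (Fin 2) ℂ) *ᵥ w' = (y₂ * e) • v + (x₂ * c + y₂ * f) • w := by
      rw [hw'c, Matrix.mulVec_add, Matrix.mulVec_smul, Matrix.mulVec_smul, hc, hAw]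
      funext i; simp only [Pi.add_apply, Pi.smul_apply, smul_eq_mul]; ring
    have rhs : Mi • w' = (Mi * x₂) • v + (Mi * y₂) • w := by
      rw [hw'c]; funext i; simp only [Pi.add_apply, Pi.smul_apply, smul_eq_mul]; ring
    rw [← lhs, ← rhs, hAw']
  obtain ⟨E3, E4⟩ := coeffs_eq hΔ eigen2
  -- nonvanishing
  have he0 : e ≠ 0 := by intro h0; rw [h0, mul_zero] at hce; norm_num at hce
  have hy : y ≠ 0 := by
    intro h0
    have hx0 : x = 0 := by
      have : m * x = 0 := by rw [← E1, h0]; ring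
      exact (mul_eq_zero.mp this).resolve_left hm0
    exact hv' (by rw [hv'c, hx0, h0, zero_smul, zero_smul, add_zero])
  have hx : x ≠ 0 := by
    intro h0
    apply hy
    have : y * e = 0 := by rw [E1, h0, mul_zero]
    exact (mul_eq_zero.mp this).resolve_right he0
  have hy₂ : y₂ ≠ 0 := by
    intro h0
    have hx0 : x₂ = 0 := by
      have : Mi * x₂ = 0 := by rw [← E3, h0]; ring
      exact (mul_eq_zero.mp this).resolve_left (inv_ne_zero hm0)
    exact hw' (by rw [hw'c, hx0, h0, zero_smul, zero_smul, add_zero])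
  have hx₂ : x₂ ≠ 0 := by
    intro h0
    apply hy₂
    have : y₂ * e = 0 := by rw [E3, h0, mul_zero]
    exact (mul_eq_zero.mp this).resolve_right he0
  have hyye : y * y₂ * e ≠ 0 := mul_ne_zero (mul_ne_zero hy hy₂) he0
  -- the trace of A in terms of m
  have hf : f = m + Mi := by
    have key : x * (m * f - 1 - m ^ 2) = 0 := by
      linear_combination e * E2 + (m - f) * E1 - x * hce
    have h7 := (mul_eq_zero.mp key).resolve_left hx
    have h8 : m * f = 1 + m ^ 2 := by linear_combination h7
    rw [hMidef]
    field_simp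
    linear_combination h8
  -- the action of B on the eigenvectors of A, in coordinates
  have hBv' : (B : Matrix (Fin 2) (Fin 2) ℂ) *ᵥ v' = (l * x) • v + (L * y) • w := by
    rw [hv'c, Matrix.mulVec_add, Matrix.mulVec_smul, Matrix.mulVec_smul, hBv, hBw]
    funext i; simp only [Pi.add_apply, Pi.smul_apply, smul_eq_mul]; ring
  have hBw2 : (B : Matrix (Fin 2) (Fin 2) ℂ) *ᵥ w' = (l * x₂) • v + (L * y₂) • w := by
    rw [hw'c, Matrix.mulVec_add, Matrix.mulVec_smul, Matrix.mulVec_smul, hBv, hBw]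
    funext i; simp only [Pi.add_apply, Pi.smul_apply, smul_eq_mul]; ring
  -- condition 1 is equivalent to l² = m²
  have cond1 : (∃ d : ℂ, (B : Matrix (Fin 2) (Fin 2) ℂ) *ᵥ v' = d • w') ↔ l ^ 2 = m ^ 2 := by
    constructor
    · rintro ⟨d, hd⟩
      rw [hBv'] at hd
      have hd2 : (l * x) • v + (L * y) • w = (d * x₂) • v + (d * y₂) • w := by
        rw [hd, hw'c, smul_add, smul_smul, smul_smul]
      obtain ⟨c1, c2⟩ := coeffs_eq hΔ hd2
      have cross : (l * x) * y₂ = (L * y) * x₂ := by linear_combination y₂ * c1 - x₂ * c2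
      have step : (l - L * m ^ 2) * (y * y₂ * e) = 0 := by
        linear_combination m * cross + l * y₂ * E1 - L * m ^ 2 * y * E3 - L * m * y * x₂ * hMi
      have h9 : l = L * m ^ 2 := by
        have h10 := (mul_eq_zero.mp step).resolve_right hyye
        linear_combination h10
      linear_combination l * h9 + m ^ 2 * hL
    · intro hlm
      have cross0 : (l * m) * ((l * x) * y₂ - (L * y) * x₂) = 0 := by
        linear_combination -(m ^ 2 * y₂) * E1 + (m * x * y₂) * hlm + (m ^ 2 * y) * E3
          + (m * y * x₂) * hMi - (m * y * x₂) * hL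
      have cross : (l * x) * y₂ = (L * y) * x₂ := by
        have h10 := (mul_eq_zero.mp cross0).resolve_left (mul_ne_zero hl0 hm0)
        linear_combination h10
      refine ⟨(l * x) / x₂, ?_⟩
      rw [hBv', hw'c, smul_add, smul_smul, smul_smul]
      have c1 : (l * x) / x₂ * x₂ = l * x := by field_simp
      have c2 : (l * x) / x₂ * y₂ = L * y := by
        field_simp
        linear_combination cross
      rw [c1, c2]
  -- condition 2 is equivalent to l²m² = 1
  have cond2 : (∃ d : ℂ, (B : Matrix (Fin 2) (Fin 2) ℂ) *ᵥ w' = d • v') ↔ l ^ 2 * m ^ 2 = 1 := by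
    constructor
    · rintro ⟨d, hd⟩
      rw [hBw2] at hd
      have hd2 : (l * x₂) • v + (L * y₂) • w = (d * x) • v + (d * y) • w := by
        rw [hd, hv'c, smul_add, smul_smul, smul_smul]
      obtain ⟨c1, c2⟩ := coeffs_eq hΔ hd2
      have cross : (l * x₂) * y = (L * y₂) * x := by linear_combination y * c1 - x * c2
      have step : (l * m ^ 2 - L) * (y * y₂ * e) = 0 := by
        linear_combination m * cross - L * y₂ * E1 + l * m ^ 2 * y * E3 + l * m * y * x₂ * hMi
      have h9 : l * m ^ 2 = L := by
        have h10 := (mul_eq_zero.mp step).resolve_right hyye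
        linear_combination h10
      linear_combination l * h9 + hL
    · intro hlm
      have cross0 : (l * m) * ((l * x₂) * y - (L * y₂) * x) = 0 := by
        linear_combination (y * y₂ * e) * hlm - (l ^ 2 * m ^ 2 * y) * E3
          - (l ^ 2 * m * y * x₂) * hMi + y₂ * E1 - (m * x * y₂) * hL
      have cross : (l * x₂) * y = (L * y₂) * x := by
        have h10 := (mul_eq_zero.mp cross0).resolve_left (mul_ne_zero hl0 hm0)
        linear_combination h10
      refine ⟨(l * x₂) / x, ?_⟩
      rw [hBw2, hv'c, smul_add, smul_smul, smul_smul]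
      have c1 : (l * x₂) / x * x = l * x₂ := by field_simp
      have c2 : (l * x₂) / x * y = L * y₂ := by
        field_simp
        linear_combination cross
      rw [c1, c2]
  have hlm0 : l ^ 2 * m ^ 2 ≠ 0 := mul_ne_zero (pow_ne_zero 2 hl0) (pow_ne_zero 2 hm0)
  have final : tA ^ 2 = tB ^ 2 ↔ (l ^ 2 = m ^ 2 ∨ l ^ 2 * m ^ 2 = 1) := by
    rw [htA, htB, hf]
    constructor
    · intro hq
      have hz : (m ^ 2 - l ^ 2) * (l ^ 2 * m ^ 2 - 1) = 0 := by
        linear_combination (l ^ 2 * m ^ 2) * hq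
          + (-2 * l ^ 2 * m ^ 2 - 2 * l ^ 2 - l ^ 2 * (m * Mi - 1)) * hMi
          + (2 * l ^ 2 * m ^ 2 + 2 * m ^ 2 + m ^ 2 * (l * L - 1)) * hL
      rcases mul_eq_zero.mp hz with h0 | h0
      · left; linear_combination -h0
      · right; linear_combination h0
    · intro hq
      have hzz : ((m + Mi) ^ 2 - (l + L) ^ 2) * (l ^ 2 * m ^ 2) = 0 := by
        rcases hq with h0 | h0
        · linear_combination (-(l ^ 2 * m ^ 2 - 1)) * h0
            + (2 * l ^ 2 * m ^ 2 + 2 * l ^ 2 + l ^ 2 * (m * Mi - 1)) * hMi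
            + (-2 * l ^ 2 * m ^ 2 - 2 * m ^ 2 - m ^ 2 * (l * L - 1)) * hL
        · linear_combination (m ^ 2 - l ^ 2) * h0
            + (2 * l ^ 2 * m ^ 2 + 2 * l ^ 2 + l ^ 2 * (m * Mi - 1)) * hMi
            + (-2 * l ^ 2 * m ^ 2 - 2 * m ^ 2 - m ^ 2 * (l * L - 1)) * hL
      have := (mul_eq_zero.mp hzz).resolve_right hlm0
      linear_combination this
  rw [cond1, cond2, final]


/-- if loxodromic `α` sends a fixed point of loxodromic `β` to the other, then `β`
sends a fixed point of `α` to the other iff `tr²(α) = tr²(β)`. -/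
theorem statement18 (α β : PSL2C) (hα : IsLoxodromic α) (hβ : IsLoxodromic β)
    (h : SendsFixedToOther α β) :
    SendsFixedToOther β α ↔ trSq α = trSq β := by
  classical
  set A := Quotient.out α with hAdef
  set B := Quotient.out β with hBdef
  have hA : projPSL A = α := projPSL_out α
  have hB : projPSL B = β := projPSL_out β
  have htrα : trSq α = (Matrix.trace ((A : SL2C) : Matrix (Fin 2) (Fin 2) ℂ)) ^ 2 := rfl
  have htrβ : trSq β = (Matrix.trace ((B : SL2C) : Matrix (Fin 2) (Fin 2) ℂ)) ^ 2 := rfl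
  have hA4 : (Matrix.trace ((A : SL2C) : Matrix (Fin 2) (Fin 2) ℂ)) ^ 2 ≠ 4 := by
    intro h4
    exact hα ⟨4, by norm_num, by norm_num, by rw [htrα, h4]; norm_num⟩
  have hB4 : (Matrix.trace ((B : SL2C) : Matrix (Fin 2) (Fin 2) ℂ)) ^ 2 ≠ 4 := by
    intro h4
    exact hβ ⟨4, by norm_num, by norm_num, by rw [htrβ, h4]; norm_num⟩
  obtain ⟨m, v', w', hv', hw', hAv', hAw', hm0, hm2, hΔ'⟩ := eigen_data A hA4
  obtain ⟨l, v, w, hvne, hwne, hBv, hBw, hl0, hl2, hΔ⟩ := eigen_data B hB4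
  -- translate the hypothesis `h`
  obtain ⟨p, q, hpq, hfp, hfq, hor⟩ := h
  rw [← hB] at hfp hfq
  rw [← hA] at hor
  have hp := fixed_classify B hvne hwne hBv hBw hl0 hl2 hΔ p hfp
  have hq := fixed_classify B hvne hwne hBv hBw hl0 hl2 hΔ q hfq
  have hkey : (∃ c : ℂ, (A : Matrix (Fin 2) (Fin 2) ℂ) *ᵥ v = c • w) ∨
      (∃ c : ℂ, (A : Matrix (Fin 2) (Fin 2) ℂ) *ᵥ w = c • v) := by
    rcases hp with hp | hp <;> rcases hq with hq | hq
    · exact absurd (hp.trans hq.symm) hpq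
    · rcases hor with h1 | h1
      · rw [hp, hq, act_mk_eq_mk_iff] at h1
        obtain ⟨c, _, hc⟩ := h1; exact Or.inl ⟨c, hc⟩
      · rw [hp, hq, act_mk_eq_mk_iff] at h1
        obtain ⟨c, _, hc⟩ := h1; exact Or.inr ⟨c, hc⟩
    · rcases hor with h1 | h1
      · rw [hp, hq, act_mk_eq_mk_iff] at h1
        obtain ⟨c, _, hc⟩ := h1; exact Or.inr ⟨c, hc⟩
      · rw [hp, hq, act_mk_eq_mk_iff] at h1
        obtain ⟨c, _, hc⟩ := h1; exact Or.inl ⟨c, hc⟩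
    · exact absurd (hp.trans hq.symm) hpq
  have main : ((∃ d : ℂ, (B : Matrix (Fin 2) (Fin 2) ℂ) *ᵥ v' = d • w') ∨
      (∃ d : ℂ, (B : Matrix (Fin 2) (Fin 2) ℂ) *ᵥ w' = d • v')) ↔
      (Matrix.trace ((A : SL2C) : Matrix (Fin 2) (Fin 2) ℂ)) ^ 2 =
      (Matrix.trace ((B : SL2C) : Matrix (Fin 2) (Fin 2) ℂ)) ^ 2 := by
    rcases hkey with ⟨c, hc⟩ | ⟨c, hc⟩
    · exact core A B l m c v w v' w' hv' hw' hBv hBw hAv' hAw' hl0 hm0 hΔ hΔ' hc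
    · have hBv2 : (B : Matrix (Fin 2) (Fin 2) ℂ) *ᵥ v = (l⁻¹)⁻¹ • v := by
        rw [inv_inv]; exact hBv
      have hΔ2 : Del w v ≠ 0 := by
        intro h0
        apply hΔ
        have hsym : Del v w = -Del w v := by simp only [Del]; ring
        rw [hsym, h0, neg_zero]
      exact core A B l⁻¹ m c w v v' w' hv' hw' hBw hBv2 hAv' hAw'
        (inv_ne_zero hl0) hm0 hΔ2 hΔ' hc
  rw [htrα, htrβ, ← main]
  constructor
  · rintro ⟨p', q', hpq', hfp', hfq', hor'⟩
    rw [← hA] at hfp' hfq'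
    rw [← hB] at hor'
    have hp' := fixed_classify A hv' hw' hAv' hAw' hm0 hm2 hΔ' p' hfp'
    have hq' := fixed_classify A hv' hw' hAv' hAw' hm0 hm2 hΔ' q' hfq'
    rcases hp' with h1 | h1 <;> rcases hq' with h2 | h2
    · exact absurd (h1.trans h2.symm) hpq'
    · rcases hor' with h3 | h3
      · rw [h1, h2, act_mk_eq_mk_iff] at h3
        obtain ⟨d, _, hd⟩ := h3; exact Or.inl ⟨d, hd⟩
      · rw [h1, h2, act_mk_eq_mk_iff] at h3
        obtain ⟨d, _, hd⟩ := h3; exact Or.inr ⟨d, hd⟩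
    · rcases hor' with h3 | h3
      · rw [h1, h2, act_mk_eq_mk_iff] at h3
        obtain ⟨d, _, hd⟩ := h3; exact Or.inr ⟨d, hd⟩
      · rw [h1, h2, act_mk_eq_mk_iff] at h3
        obtain ⟨d, _, hd⟩ := h3; exact Or.inl ⟨d, hd⟩
    · exact absurd (h1.trans h2.symm) hpq'
  · rintro (⟨d, hd⟩ | ⟨d, hd⟩)
    · refine ⟨Projectivization.mk ℂ v' hv', Projectivization.mk ℂ w' hw',
        mk_ne_mk_of_Del hv' hw' hΔ', ?_, ?_, Or.inl ?_⟩
      · rw [← hA, act_mk_eq_mk_iff]; exact ⟨m, hm0, hAv'⟩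
      · rw [← hA, act_mk_eq_mk_iff]; exact ⟨m⁻¹, inv_ne_zero hm0, hAw'⟩
      · rw [← hB, act_mk_eq_mk_iff]
        refine ⟨d, fun h0 => mulVec_ne_zero B hv' ?_, hd⟩
        rw [hd, h0, zero_smul]
    · refine ⟨Projectivization.mk ℂ v' hv', Projectivization.mk ℂ w' hw',
        mk_ne_mk_of_Del hv' hw' hΔ', ?_, ?_, Or.inr ?_⟩
      · rw [← hA, act_mk_eq_mk_iff]; exact ⟨m, hm0, hAv'⟩
      · rw [← hA, act_mk_eq_mk_iff]; exact ⟨m⁻¹, inv_ne_zero hm0, hAw'⟩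
      · rw [← hB, act_mk_eq_mk_iff]
        refine ⟨d, fun h0 => mulVec_ne_zero B hw' ?_, hd⟩
        rw [hd, h0, zero_smul]
end
end

section
/- Let f, g ∈ PSL(2,ℂ) be loxodromic with f² = g². Then either f = g, or there exists r ∈ PSL(2,ℂ) with r ≠ 1, r² = 1, f = g·r, and r fixes both fixed points of g in ℙ¹(ℂ) (i.e. r is an elliptic involution with the same axis as f and g; in particular f and g have the same fixed points). -/
/- Common setup: PSL(2,ℂ), its action on ℙ¹(ℂ), loxodromic/parabolic/elliptic elements,
elementary subgroups, surface groups, the pentagon group Γ and the embedding ι. -/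

noncomputable section

open Matrix

namespace Stmt19Aux

open Matrix

lemma mem_center_iff' (A : SL2C) :
    A ∈ Subgroup.center SL2C ↔
      (A : Matrix (Fin 2) (Fin 2) ℂ) = 1 ∨ (A : Matrix (Fin 2) (Fin 2) ℂ) = -1 := by
  rw [Matrix.SpecialLinearGroup.mem_center_iff]
  constructor
  · rintro ⟨r, hr, hA⟩
    rw [Fintype.card_fin] at hr
    rcases mul_self_eq_one_iff.mp (by rwa [pow_two] at hr) with h | h <;> subst h
    · left; rw [← hA, _root_.map_one]
    · right; rw [← hA, _root_.map_neg, _root_.map_one]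
  · rintro (h | h)
    · exact ⟨1, by norm_num, by rw [_root_.map_one, h]⟩
    · exact ⟨-1, by norm_num, by rw [_root_.map_neg, _root_.map_one, h]⟩

lemma projPSL_eq_iff (A B : SL2C) :
    projPSL A = projPSL B ↔
      (A : Matrix (Fin 2) (Fin 2) ℂ) = B ∨ (A : Matrix (Fin 2) (Fin 2) ℂ) = -(B : Matrix (Fin 2) (Fin 2) ℂ) := by
  rw [projPSL, QuotientGroup.mk'_eq_mk']
  constructor
  · rintro ⟨z, hz, rfl⟩
    rcases (mem_center_iff' z).mp hz with h | h
    · left; rw [Matrix.SpecialLinearGroup.coe_mul, h, mul_one]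
    · right; rw [Matrix.SpecialLinearGroup.coe_mul, h, mul_neg, mul_one, neg_neg]
  · rintro (h | h)
    · exact ⟨1, Subgroup.one_mem _, by rw [mul_one]; exact Subtype.ext h⟩
    · refine ⟨-1, (mem_center_iff' _).mpr (Or.inr (by simp)), ?_⟩
      apply Subtype.ext
      rw [Matrix.SpecialLinearGroup.coe_mul, Matrix.SpecialLinearGroup.coe_neg,
        Matrix.SpecialLinearGroup.coe_one, mul_neg, mul_one, h, neg_neg]

lemma out_proj (g : PSL2C) : projPSL (Quotient.out g) = g :=
  Quotient.out_eq g

lemma sl2_vec_inj (A : SL2C) {x y : Fin 2 → ℂ}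
    (h : (A : Matrix (Fin 2) (Fin 2) ℂ) *ᵥ x = (A : Matrix (Fin 2) (Fin 2) ℂ) *ᵥ y) : x = y := by
  have h2 := congrArg (fun z => ((A⁻¹ : SL2C) : Matrix (Fin 2) (Fin 2) ℂ) *ᵥ z) h
  simp only [Matrix.mulVec_mulVec, ← Matrix.SpecialLinearGroup.coe_mul,
    inv_mul_cancel, Matrix.SpecialLinearGroup.coe_one, Matrix.one_mulVec] at h2
  exact h2

lemma smul_vec_cancel {c d : ℂ} {v : Fin 2 → ℂ} (hv : v ≠ 0) (h : c • v = d • v) : c = d := by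
  by_contra hne
  apply hv
  have h2 : (c - d) • v = 0 := by rw [sub_smul, h, sub_self]
  rcases smul_eq_zero.mp h2 with h3 | h3
  · exact absurd (sub_eq_zero.mp h3) hne
  · exact absurd h3 hv

lemma line_lemma {p q u0 u1 v0 v1 : ℂ} (hpq : ¬(p = 0 ∧ q = 0))
    (hu : p * u0 + q * u1 = 0) (hv : p * v0 + q * v1 = 0) (hv0 : ¬(v0 = 0 ∧ v1 = 0)) :
    ∃ c : ℂ, u0 = c * v0 ∧ u1 = c * v1 := by
  by_cases hq : q = 0
  · have hp : p ≠ 0 := fun h => hpq ⟨h, hq⟩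
    subst hq
    have hu0 : u0 = 0 := by
      have : p * u0 = 0 := by linear_combination hu
      exact (mul_eq_zero.mp this).resolve_left hp
    have hvv0 : v0 = 0 := by
      have : p * v0 = 0 := by linear_combination hv
      exact (mul_eq_zero.mp this).resolve_left hp
    have hv1 : v1 ≠ 0 := fun h => hv0 ⟨hvv0, h⟩
    refine ⟨u1 / v1, ?_, ?_⟩
    · rw [hu0, hvv0, mul_zero]
    · field_simp
  · have hvv0 : v0 ≠ 0 := by
      intro h0
      apply hv0
      refine ⟨h0, ?_⟩
      have : q * v1 = 0 := by linear_combination hv - p * h0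
      exact (mul_eq_zero.mp this).resolve_left hq
    have key : q * (u1 * v0) = q * (u0 * v1) := by linear_combination v0 * hu - u0 * hv
    have key2 : u1 * v0 = u0 * v1 := mul_left_cancel₀ hq key
    refine ⟨u0 / v0, by field_simp, ?_⟩
    rw [div_mul_eq_mul_div, eq_div_iff hvv0]
    linear_combination key2

lemma ker_line {M : Matrix (Fin 2) (Fin 2) ℂ} (hM : M ≠ 0) {u v : Fin 2 → ℂ}
    (hMu : M *ᵥ u = 0) (hMv : M *ᵥ v = 0) (hv : v ≠ 0) : ∃ c : ℂ, u = c • v := by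
  have hvne : ¬(v 0 = 0 ∧ v 1 = 0) := by
    rintro ⟨h0, h1⟩
    apply hv
    funext i; fin_cases i <;> assumption
  obtain ⟨i, j, hij⟩ : ∃ i j, M i j ≠ 0 := by
    by_contra hc
    push_neg at hc
    apply hM
    ext i j
    simpa using hc i j
  have hrow : ¬(M i 0 = 0 ∧ M i 1 = 0) := by
    rintro ⟨h0, h1⟩
    fin_cases j <;> simp_all
  have hu' : M i 0 * u 0 + M i 1 * u 1 = 0 := by
    have := congrFun hMu i
    simpa [Matrix.mulVec, dotProduct, Fin.sum_univ_two] using this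
  have hv' : M i 0 * v 0 + M i 1 * v 1 = 0 := by
    have := congrFun hMv i
    simpa [Matrix.mulVec, dotProduct, Fin.sum_univ_two] using this
  obtain ⟨c, hc0, hc1⟩ := line_lemma hrow hu' hv' hvne
  refine ⟨c, ?_⟩
  funext k; fin_cases k <;> simp [hc0, hc1]

lemma sub_smul_ne (G : Matrix (Fin 2) (Fin 2) ℂ) (hdet : G.det = 1)
    (ht : G.trace ^ 2 ≠ 4) (c : ℂ) : G - c • 1 ≠ 0 := by
  intro h
  have h00 : G 0 0 = c := by
    have := congrFun (congrFun h 0) 0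
    simpa [sub_eq_zero] using this
  have h11 : G 1 1 = c := by
    have := congrFun (congrFun h 1) 1
    simpa [sub_eq_zero] using this
  have h01 : G 0 1 = 0 := by
    have := congrFun (congrFun h 0) 1
    simpa [Matrix.one_apply, sub_eq_zero] using this
  have h10 : G 1 0 = 0 := by
    have := congrFun (congrFun h 1) 0
    simpa [Matrix.one_apply, sub_eq_zero] using this
  rw [Matrix.det_fin_two] at hdet
  rw [Matrix.trace_fin_two] at ht
  rw [h00, h11] at ht
  rw [h00, h11, h01, h10] at hdet
  apply ht
  linear_combination 4 * hdet

lemma exists_eigen (G : Matrix (Fin 2) (Fin 2) ℂ) (hdet : G.det = 1) (ht : G.trace ^ 2 ≠ 4)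
    (c : ℂ) (hc : c ^ 2 - G.trace * c + 1 = 0) : ∃ v : Fin 2 → ℂ, v ≠ 0 ∧ G *ᵥ v = c • v := by
  have hdet' : G 0 0 * G 1 1 - G 0 1 * G 1 0 = 1 := by rw [← Matrix.det_fin_two]; exact hdet
  have hc' : c ^ 2 - (G 0 0 + G 1 1) * c + 1 = 0 := by rw [← Matrix.trace_fin_two]; exact hc
  by_cases h0 : G 0 0 - c = 0 ∧ G 0 1 = 0
  · refine ⟨![G 1 1 - c, -(G 1 0)], ?_, ?_⟩
    · intro hz
      apply sub_smul_ne G hdet ht c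
      have e0 := congrFun hz 0
      have e1 := congrFun hz 1
      simp at e0 e1
      ext i j
      fin_cases i <;> fin_cases j <;>
        simp [Matrix.one_apply, h0.1, h0.2, e0, e1, sub_eq_zero]
    · have ha : G 0 0 = c := by linear_combination h0.1
      funext i
      fin_cases i <;>
        simp [Matrix.mulVec, dotProduct, Fin.sum_univ_two] <;>
        [linear_combination (G 1 1 - c) * ha + (-(G 1 0)) * h0.2; ring]
  · refine ⟨![G 0 1, -(G 0 0 - c)], ?_, ?_⟩
    · intro hz
      apply h0
      have e0 := congrFun hz 0
      have e1 := congrFun hz 1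
      simp at e0 e1
      exact ⟨by linear_combination -e1, e0⟩
    · funext i
      fin_cases i <;>
        simp [Matrix.mulVec, dotProduct, Fin.sum_univ_two] <;>
        [ring; linear_combination -hc' - hdet']

lemma ch2 (G : Matrix (Fin 2) (Fin 2) ℂ) (hdet : G.det = 1) :
    G * G - G.trace • G + 1 = 0 := by
  rw [Matrix.det_fin_two] at hdet
  ext i j
  fin_cases i <;> fin_cases j <;>
    simp [Matrix.mul_apply, Fin.sum_univ_two, Matrix.one_apply, Matrix.trace_fin_two] <;>
    first
      | linear_combination -hdet
      | ring

lemma eigen_class (G : Matrix (Fin 2) (Fin 2) ℂ) (hdet : G.det = 1) {u : Fin 2 → ℂ} (hu : u ≠ 0)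
    {c : ℂ} (hGu : G *ᵥ u = c • u) : c ^ 2 - G.trace * c + 1 = 0 := by
  have h2 : (G * G) *ᵥ u = (c ^ 2) • u := by
    rw [← Matrix.mulVec_mulVec, hGu, Matrix.mulVec_smul, hGu, smul_smul, ← pow_two]
  have hch : (G * G - G.trace • G + 1) *ᵥ u = (c ^ 2 - G.trace * c + 1) • u := by
    rw [Matrix.add_mulVec, Matrix.sub_mulVec, Matrix.smul_mulVec, Matrix.one_mulVec,
      h2, hGu, smul_smul]
    module
  rw [ch2 G hdet, Matrix.zero_mulVec] at hch
  rcases smul_eq_zero.mp hch.symm with h | h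
  · exact h
  · exact absurd h hu

lemma matrix_eq_of_vecs (A B : Matrix (Fin 2) (Fin 2) ℂ) (v w : Fin 2 → ℂ)
    (hdet : v 0 * w 1 - w 0 * v 1 ≠ 0)
    (hv : A *ᵥ v = B *ᵥ v) (hw : A *ᵥ w = B *ᵥ w) : A = B := by
  set P : Matrix (Fin 2) (Fin 2) ℂ := Matrix.of ![![v 0, w 0], ![v 1, w 1]] with hP
  have hdP : P.det ≠ 0 := by
    rw [Matrix.det_fin_two]
    simpa [hP] using hdet
  have hAP : A * P = B * P := by
    ext i j
    have hv' := congrFun hv i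
    have hw' := congrFun hw i
    simp only [Matrix.mulVec, dotProduct, Fin.sum_univ_two] at hv' hw'
    fin_cases j <;> simp [hP, Matrix.mul_apply, Fin.sum_univ_two] <;>
      [linear_combination hv'; linear_combination hw']
  have hPinv := Matrix.mul_nonsing_inv P (isUnit_iff_ne_zero.mpr hdP)
  calc A = A * (P * P⁻¹) := by rw [hPinv, mul_one]
    _ = A * P * P⁻¹ := by rw [mul_assoc]
    _ = B * P * P⁻¹ := by rw [hAP]
    _ = B * (P * P⁻¹) := by rw [mul_assoc]
    _ = B := by rw [hPinv, mul_one]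

lemma pslAct_mk (g : PSL2C) (v : Fin 2 → ℂ) (hv : v ≠ 0) :
    pslAct g (Projectivization.mk ℂ v hv) =
      Projectivization.mk ℂ (((Quotient.out g : SL2C) : Matrix (Fin 2) (Fin 2) ℂ) *ᵥ v)
        (fun hz => hv (sl2_toLin'_injective (Quotient.out g)
          (by simpa [Matrix.toLin'_apply] using hz))) := by
  rw [pslAct, Projectivization.map_mk]
  apply (Projectivization.mk_eq_mk_iff' ℂ _ _ _ _).mpr
  exact ⟨1, by simp [Matrix.toLin'_apply]⟩

lemma pslAct_fix {g : PSL2C} {A : SL2C} (hA : projPSL A = g) {v : Fin 2 → ℂ} (hv : v ≠ 0)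
    {c : ℂ} (hc : c ≠ 0) (h : (A : Matrix (Fin 2) (Fin 2) ℂ) *ᵥ v = c • v) :
    pslAct g (Projectivization.mk ℂ v hv) = Projectivization.mk ℂ v hv := by
  have hout : projPSL (Quotient.out g) = g := out_proj g
  rw [pslAct_mk]
  rcases (projPSL_eq_iff (Quotient.out g) A).mp (hout.trans hA.symm) with ho | ho
  · exact (Projectivization.mk_eq_mk_iff' ℂ _ _ _ hv).mpr ⟨c, by rw [ho, h]⟩
  · refine (Projectivization.mk_eq_mk_iff' ℂ _ _ _ hv).mpr ⟨-c, ?_⟩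
    rw [ho, Matrix.neg_mulVec, h, neg_smul]

lemma fix_eigen {g : PSL2C} {v : Fin 2 → ℂ} (hv : v ≠ 0)
    (h : pslAct g (Projectivization.mk ℂ v hv) = Projectivization.mk ℂ v hv) :
    ∃ c : ℂ, c ≠ 0 ∧ ((Quotient.out g : SL2C) : Matrix (Fin 2) (Fin 2) ℂ) *ᵥ v = c • v := by
  rw [pslAct_mk] at h
  obtain ⟨a, ha⟩ := (Projectivization.mk_eq_mk_iff ℂ _ _ _ hv).mp h
  refine ⟨(a : ℂ), a.ne_zero, ?_⟩
  rw [← ha, Units.smul_def]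

end Stmt19Aux

open Stmt19Aux in
/-- two loxodromic elements with equal squares are equal or differ by an elliptic
involution fixing both fixed points. -/
theorem statement19 (f g : PSL2C) (hf : IsLoxodromic f) (hg : IsLoxodromic g)
    (h : f * f = g * g) :
    f = g ∨ ∃ r : PSL2C, r ≠ 1 ∧ r * r = 1 ∧ f = g * r ∧
      ∀ x : P1, pslAct g x = x → pslAct r x = x := by
  classical
  set F : SL2C := Quotient.out f with hFdef
  set G : SL2C := Quotient.out g with hGdef
  have hpf : projPSL F = f := out_proj f
  have hpg : projPSL G = g := out_proj g
  set GM : Matrix (Fin 2) (Fin 2) ℂ := (G : Matrix (Fin 2) (Fin 2) ℂ) with hGM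
  set FM : Matrix (Fin 2) (Fin 2) ℂ := (F : Matrix (Fin 2) (Fin 2) ℂ) with hFM
  have hdetG : GM.det = 1 := G.property
  have hdetF : FM.det = 1 := F.property
  set t : ℂ := GM.trace with htdef
  have htrSq : trSq g = t ^ 2 := rfl
  have ht4 : t ^ 2 ≠ 4 := by
    intro hh
    exact hg ⟨4, by norm_num, le_refl 4, by rw [htrSq, hh]; norm_num⟩
  have ht0 : t ^ 2 ≠ 0 := by
    intro hh
    exact hg ⟨0, le_refl 0, by norm_num, by rw [htrSq, hh]; norm_num⟩
  obtain ⟨s, hs⟩ := IsAlgClosed.exists_pow_nat_eq (k := ℂ) (t ^ 2 - 4) zero_lt_two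
  have hs0 : s ≠ 0 := by
    intro hh
    apply ht4
    rw [hh] at hs
    linear_combination -hs
  set μ : ℂ := (t + s) / 2 with hμdef
  set ν : ℂ := (t - s) / 2 with hνdef
  have hprod : μ * ν = 1 := by
    rw [hμdef, hνdef]
    field_simp
    linear_combination -hs
  have hsum : μ + ν = t := by rw [hμdef, hνdef]; ring
  have hμν : μ ≠ ν := by
    intro hh
    apply hs0
    have hd : μ - ν = s := by rw [hμdef, hνdef]; ring
    rw [hh, sub_self] at hd
    exact hd.symm
  have hμ0 : μ ≠ 0 := left_ne_zero_of_mul_eq_one hprod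
  have hν0 : ν ≠ 0 := right_ne_zero_of_mul_eq_one hprod
  have hcμ : μ ^ 2 - t * μ + 1 = 0 := by linear_combination μ * hsum - hprod
  have hcν : ν ^ 2 - t * ν + 1 = 0 := by linear_combination ν * hsum - hprod
  obtain ⟨v, hv0, hGv⟩ := exists_eigen GM hdetG ht4 μ hcμ
  obtain ⟨w, hw0, hGw⟩ := exists_eigen GM hdetG ht4 ν hcν
  have hv01 : ¬(v 0 = 0 ∧ v 1 = 0) := by
    rintro ⟨h0, h1⟩
    apply hv0
    funext i; fin_cases i <;> assumption
  have hdetP : v 0 * w 1 - w 0 * v 1 ≠ 0 := by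
    intro hPdet
    obtain ⟨k, hk0, hk1⟩ := line_lemma (p := v 1) (q := -(v 0)) (u0 := w 0) (u1 := w 1)
      (v0 := v 0) (v1 := v 1)
      (by rintro ⟨h1, h0⟩; exact hv01 ⟨by linear_combination -h0, h1⟩)
      (by linear_combination -hPdet) (by ring) hv01
    have hw' : w = k • v := by
      funext i
      fin_cases i <;> simp [hk0, hk1]
    have hGw2 : GM *ᵥ w = μ • w := by
      rw [hw', Matrix.mulVec_smul, hGv, smul_smul, smul_smul, mul_comm]
    rw [hGw] at hGw2
    exact hμν (smul_vec_cancel hw0 hGw2).symm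
  have hsq : projPSL (F * F) = projPSL (G * G) := by
    rw [_root_.map_mul, _root_.map_mul, hpf, hpg, h]
  have hFFm : FM * FM = GM * GM ∨ FM * FM = -(GM * GM) := by
    rcases (projPSL_eq_iff (F * F) (G * G)).mp hsq with hFF | hFF <;>
      rw [Matrix.SpecialLinearGroup.coe_mul, Matrix.SpecialLinearGroup.coe_mul] at hFF
    · left; exact hFF
    · right; exact hFF
  have hcomm : FM * (GM * GM) = (GM * GM) * FM := by
    rcases hFFm with hFF | hFF
    · calc FM * (GM * GM) = FM * (FM * FM) := by rw [hFF]
        _ = (FM * FM) * FM := by rw [mul_assoc]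
        _ = (GM * GM) * FM := by rw [hFF]
    · have hGG : GM * GM = -(FM * FM) := by rw [hFF, neg_neg]
      rw [hGG]
      simp only [mul_neg, neg_mul, mul_assoc]
  have hG2v : (GM * GM) *ᵥ v = (μ * μ) • v := by
    rw [← Matrix.mulVec_mulVec, hGv, Matrix.mulVec_smul, hGv, smul_smul]
  have hG2w : (GM * GM) *ᵥ w = (ν * ν) • w := by
    rw [← Matrix.mulVec_mulVec, hGw, Matrix.mulVec_smul, hGw, smul_smul]
  have hμμνν : μ * μ ≠ ν * ν := by
    intro hh
    have hfact : (μ - ν) * (μ + ν) = 0 := by linear_combination hh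
    rcases mul_eq_zero.mp hfact with h1 | h1
    · exact hμν (sub_eq_zero.mp h1)
    · apply ht0
      rw [← hsum, h1]
      norm_num
  -- F preserves the eigenlines of G²
  have eigF : ∀ (c : ℂ) (u : Fin 2 → ℂ), u ≠ 0 → (GM * GM) *ᵥ u = c • u →
      (∀ u' : Fin 2 → ℂ, (GM * GM) *ᵥ u' = c • u' → ∃ a : ℂ, u' = a • u) := by
    intro c u hu hcu u' hcu'
    have hM2 : GM * GM - c • 1 ≠ 0 := by
      intro hzero
      have h1 : (GM * GM - c • (1 : Matrix (Fin 2) (Fin 2) ℂ)) *ᵥ v = 0 := by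
        rw [hzero, Matrix.zero_mulVec]
      have h2 : (GM * GM - c • (1 : Matrix (Fin 2) (Fin 2) ℂ)) *ᵥ w = 0 := by
        rw [hzero, Matrix.zero_mulVec]
      rw [Matrix.sub_mulVec, Matrix.smul_mulVec, Matrix.one_mulVec, hG2v,
        sub_eq_zero] at h1
      rw [Matrix.sub_mulVec, Matrix.smul_mulVec, Matrix.one_mulVec, hG2w,
        sub_eq_zero] at h2
      exact hμμνν ((smul_vec_cancel hv0 h1).trans (smul_vec_cancel hw0 h2).symm)
    apply ker_line hM2 _ _ hu
    · rw [Matrix.sub_mulVec, Matrix.smul_mulVec, Matrix.one_mulVec, hcu', sub_self]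
    · rw [Matrix.sub_mulVec, Matrix.smul_mulVec, Matrix.one_mulVec, hcu, sub_self]
  have hG2Fv : (GM * GM) *ᵥ (FM *ᵥ v) = (μ * μ) • (FM *ᵥ v) := by
    rw [Matrix.mulVec_mulVec, ← hcomm, ← Matrix.mulVec_mulVec, hG2v, Matrix.mulVec_smul]
  have hG2Fw : (GM * GM) *ᵥ (FM *ᵥ w) = (ν * ν) • (FM *ᵥ w) := by
    rw [Matrix.mulVec_mulVec, ← hcomm, ← Matrix.mulVec_mulVec, hG2w, Matrix.mulVec_smul]
  obtain ⟨a, hFv⟩ := eigF (μ * μ) v hv0 hG2v (FM *ᵥ v) hG2Fv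
  obtain ⟨d, hFw⟩ := eigF (ν * ν) w hw0 hG2w (FM *ᵥ w) hG2Fw
  -- determinant gives a * d = 1
  have had : a * d = 1 := by
    set P : Matrix (Fin 2) (Fin 2) ℂ := Matrix.of ![![v 0, w 0], ![v 1, w 1]] with hP
    have hdP : P.det ≠ 0 := by
      rw [Matrix.det_fin_two]
      simpa [hP] using hdetP
    have ev : ∀ i, FM i 0 * v 0 + FM i 1 * v 1 = a * v i := by
      intro i
      have := congrFun hFv i
      simpa [Matrix.mulVec, dotProduct, Fin.sum_univ_two] using this
    have ew : ∀ i, FM i 0 * w 0 + FM i 1 * w 1 = d * w i := by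
      intro i
      have := congrFun hFw i
      simpa [Matrix.mulVec, dotProduct, Fin.sum_univ_two] using this
    have hFP : FM * P = P * Matrix.of ![![a, 0], ![0, d]] := by
      ext i j
      fin_cases i <;> fin_cases j <;>
        simp [hP, Matrix.mul_apply, Fin.sum_univ_two] <;>
        first
          | linear_combination ev 0
          | linear_combination ev 1
          | linear_combination ew 0
          | linear_combination ew 1
    have hdeq := congrArg Matrix.det hFP
    rw [Matrix.det_mul, Matrix.det_mul, hdetF, one_mul] at hdeq
    have hdD : (Matrix.of ![![a, 0], ![0, d]]).det = a * d := by
      simp [Matrix.det_fin_two]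
    rw [hdD] at hdeq
    exact (mul_left_cancel₀ hdP (by rw [← hdeq, mul_one])).symm
  have hFMv : FM *ᵥ v = a • v := hFv
  have hFMw : FM *ᵥ w = d • w := hFw
  have hF2v : (FM * FM) *ᵥ v = (a * a) • v := by
    rw [← Matrix.mulVec_mulVec, hFMv, Matrix.mulVec_smul, hFMv, smul_smul]
  have hF2w : (FM * FM) *ᵥ w = (d * d) • w := by
    rw [← Matrix.mulVec_mulVec, hFMw, Matrix.mulVec_smul, hFMw, smul_smul]
  rcases hFFm with hFF | hFF
  · -- case F² = G² : f = g
    left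
    have ha2 : a * a = μ * μ := by
      apply smul_vec_cancel hv0
      rw [← hF2v, hFF, hG2v]
    have haor : a = μ ∨ a = -μ := by
      have hfac : (a - μ) * (a + μ) = 0 := by linear_combination ha2
      rcases mul_eq_zero.mp hfac with h1 | h1
      · left; exact sub_eq_zero.mp h1
      · right; linear_combination h1
    have key : FM = GM ∨ FM = -GM := by
      rcases haor with h1 | h1
      · have hd : d = ν := by
          apply mul_left_cancel₀ hμ0
          rw [hprod, ← h1, had]
        left
        apply matrix_eq_of_vecs FM GM v w hdetP
        · rw [hFMv, hGv, h1]
        · rw [hFMw, hGw, hd]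
      · have hd : d = -ν := by
          have : μ * (-d) = μ * ν := by
            rw [hprod, ← had, h1]; ring
          have h2 := mul_left_cancel₀ hμ0 this
          linear_combination -h2
        right
        apply matrix_eq_of_vecs FM (-GM) v w hdetP
        · rw [hFMv, Matrix.neg_mulVec, hGv, h1, neg_smul]
        · rw [hFMw, Matrix.neg_mulVec, hGw, hd, neg_smul]
    rw [← hpf, ← hpg]
    rcases key with hk | hk
    · exact congrArg projPSL (Subtype.ext hk)
    · exact (projPSL_eq_iff F G).mpr (Or.inr (by rw [← hGM, ← hFM, hk]))
  · -- case F² = -G² : construct the involution r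
    right
    have ha2 : a * a = -(μ * μ) := by
      apply smul_vec_cancel hv0
      rw [← hF2v, hFF, Matrix.neg_mulVec, hG2v, neg_smul]
    have hd2 : d * d = -(ν * ν) := by
      apply smul_vec_cancel hw0
      rw [← hF2w, hFF, Matrix.neg_mulVec, hG2w, neg_smul]
    set R : SL2C := G⁻¹ * F with hRdef
    have hGR : G * R = F := by rw [hRdef]; group
    have hGRM : GM * (R : Matrix (Fin 2) (Fin 2) ℂ) = FM := by
      rw [← Matrix.SpecialLinearGroup.coe_mul, hGR]
    set α : ℂ := a / μ with hαdef
    set β : ℂ := d / ν with hβdef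
    have hα2 : α * α = -1 := by
      rw [hαdef, div_mul_div_comm, ha2, neg_div, div_self (mul_ne_zero hμ0 hμ0)]
    have hβ2 : β * β = -1 := by
      rw [hβdef, div_mul_div_comm, hd2, neg_div, div_self (mul_ne_zero hν0 hν0)]
    have hα0 : α ≠ 0 := by
      intro hh; rw [hh, mul_zero] at hα2; exact (by norm_num : (0 : ℂ) ≠ -1) hα2
    have hβ0 : β ≠ 0 := by
      intro hh; rw [hh, mul_zero] at hβ2; exact (by norm_num : (0 : ℂ) ≠ -1) hβ2
    have hRv : (R : Matrix (Fin 2) (Fin 2) ℂ) *ᵥ v = α • v := by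
      apply sl2_vec_inj G
      rw [Matrix.mulVec_mulVec, hGRM, hFMv, Matrix.mulVec_smul, hGv, smul_smul,
        mul_comm α μ, ← smul_smul, hαdef, smul_smul, mul_div_cancel₀ a hμ0]
    have hRw : (R : Matrix (Fin 2) (Fin 2) ℂ) *ᵥ w = β • w := by
      apply sl2_vec_inj G
      rw [Matrix.mulVec_mulVec, hGRM, hFMw, Matrix.mulVec_smul, hGw, smul_smul,
        mul_comm β ν, ← smul_smul, hβdef, smul_smul, mul_div_cancel₀ d hν0]
    refine ⟨projPSL R, ?_, ?_, ?_, ?_⟩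
    · -- r ≠ 1
      intro h1
      have h2 : projPSL R = projPSL 1 := by rw [h1, _root_.map_one]
      rcases (projPSL_eq_iff R 1).mp h2 with hc | hc <;>
        rw [Matrix.SpecialLinearGroup.coe_one] at hc
      · rw [hc, Matrix.one_mulVec] at hRv
        have : (1 : ℂ) = α := smul_vec_cancel hv0 (by rw [one_smul]; exact hRv)
        rw [← this, mul_one] at hα2
        norm_num at hα2
      · rw [hc, Matrix.neg_mulVec, Matrix.one_mulVec] at hRv
        have : (-1 : ℂ) = α := smul_vec_cancel hv0 (by rw [neg_smul, one_smul]; exact hRv)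
        rw [← this] at hα2
        norm_num at hα2
    · -- r * r = 1
      have hR2 : ((R * R : SL2C) : Matrix (Fin 2) (Fin 2) ℂ) = -(1 : Matrix (Fin 2) (Fin 2) ℂ) := by
        rw [Matrix.SpecialLinearGroup.coe_mul]
        apply matrix_eq_of_vecs _ _ v w hdetP
        · rw [← Matrix.mulVec_mulVec, hRv, Matrix.mulVec_smul, hRv, smul_smul, hα2,
            Matrix.neg_mulVec, Matrix.one_mulVec, neg_smul, one_smul]
        · rw [← Matrix.mulVec_mulVec, hRw, Matrix.mulVec_smul, hRw, smul_smul, hβ2,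
            Matrix.neg_mulVec, Matrix.one_mulVec, neg_smul, one_smul]
      have : projPSL (R * R) = projPSL 1 := by
        apply (projPSL_eq_iff (R * R) 1).mpr
        right
        rw [hR2, Matrix.SpecialLinearGroup.coe_one]
      rw [_root_.map_mul, _root_.map_one] at this
      exact this
    · -- f = g * r
      rw [← hpf, ← hpg, ← _root_.map_mul, hGR]
    · -- fixed points
      intro x hx
      induction x using Projectivization.ind with
      | h u hu =>
        obtain ⟨c, hc0, hGu⟩ := fix_eigen hu hx
        have hceq : c ^ 2 - t * c + 1 = 0 := eigen_class GM hdetG hu hGu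
        have hcor : c = μ ∨ c = ν := by
          have hfac : (c - μ) * (c - ν) = 0 := by
            linear_combination hceq - c * hsum + hprod
          rcases mul_eq_zero.mp hfac with h1 | h1
          · left; exact sub_eq_zero.mp h1
          · right; exact sub_eq_zero.mp h1
        rcases hcor with hcc | hcc
        · have hM1 : GM - μ • 1 ≠ 0 := sub_smul_ne GM hdetG ht4 μ
          have hMu : (GM - μ • (1 : Matrix (Fin 2) (Fin 2) ℂ)) *ᵥ u = 0 := by
            rw [Matrix.sub_mulVec, Matrix.smul_mulVec, Matrix.one_mulVec, hGu, hcc,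
              sub_self]
          have hMv : (GM - μ • (1 : Matrix (Fin 2) (Fin 2) ℂ)) *ᵥ v = 0 := by
            rw [Matrix.sub_mulVec, Matrix.smul_mulVec, Matrix.one_mulVec, hGv, sub_self]
          obtain ⟨k, hk⟩ := ker_line hM1 hMu hMv hv0
          apply pslAct_fix (A := R) rfl hu hα0
          rw [hk, Matrix.mulVec_smul, hRv, smul_smul, smul_smul, mul_comm]
        · have hM1 : GM - ν • 1 ≠ 0 := sub_smul_ne GM hdetG ht4 ν
          have hMu : (GM - ν • (1 : Matrix (Fin 2) (Fin 2) ℂ)) *ᵥ u = 0 := by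
            rw [Matrix.sub_mulVec, Matrix.smul_mulVec, Matrix.one_mulVec, hGu, hcc,
              sub_self]
          have hMw : (GM - ν • (1 : Matrix (Fin 2) (Fin 2) ℂ)) *ᵥ w = 0 := by
            rw [Matrix.sub_mulVec, Matrix.smul_mulVec, Matrix.one_mulVec, hGw, sub_self]
          obtain ⟨k, hk⟩ := ker_line hM1 hMu hMw hw0
          apply pslAct_fix (A := R) rfl hu hβ0
          rw [hk, Matrix.mulVec_smul, hRw, smul_smul, smul_smul, mul_comm]
end
end
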